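/- Two mp-maximal subgraphs of a simple graph G are not vertex-disjoint: if G' and G'' are subgraphs of G each on q = perm_mp(A_G) vertices with perm_mp(A_{G'}) = perm_mp(A_{G''}) = q > 0, then their vertex sets intersect. -/

import Mathlib

/-- The max-plus permanent of a simple graph: the maximum over permutations `π`
of the vertex type of the number of vertices `v` with `(v, π v)` an edge. -/
noncomputable def mpPerm {V : Type*} (G : SimpleGraph V) : ℕ :=
  sSup {n : ℕ | ∃ π : Equiv.Perm V, n = Nat.card {v // G.Adj v (π v)}}

/-- If a finite graph has `mpPerm` equal to its number of vertices, there is a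
permutation moving every vertex to a neighbour. -/
lemma mpPerm_full {V : Type*} [Finite V] (H : SimpleGraph V) (q : ℕ)
    (hcard : Nat.card V = q) (hp : mpPerm H = q) :
    ∃ π : Equiv.Perm V, ∀ v, H.Adj v (π v) := by
  classical
  set S := {n : ℕ | ∃ π : Equiv.Perm V, n = Nat.card {v // H.Adj v (π v)}} with hS
  have hne : S.Nonempty := ⟨_, 1, rfl⟩
  have hbdd : BddAbove S := by
    refine ⟨q, fun n hn => ?_⟩
    obtain ⟨π, rfl⟩ := hn
    calc Nat.card {v // H.Adj v (π v)} ≤ Nat.card V :=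
          Nat.card_le_card_of_injective Subtype.val Subtype.val_injective
      _ = q := hcard
  have hmem : sSup S ∈ S := Nat.sSup_mem hne hbdd
  rw [show sSup S = q from hp] at hmem
  obtain ⟨π, hπ⟩ := hmem
  refine ⟨π, fun v => ?_⟩
  by_contra hv
  have hF := Fintype.ofFinite V
  have hlt : Fintype.card {v // H.Adj v (π v)} < Fintype.card V :=
    Fintype.card_subtype_lt (x := v) hv
  rw [← Nat.card_eq_fintype_card, ← Nat.card_eq_fintype_card, ← hπ, hcard] at hlt
  exact lt_irrefl q hlt

theorem mpMaximal_subgraphs_not_disjoint (N : ℕ) (G : SimpleGraph (Fin N))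
    (G' G'' : G.Subgraph) (q : ℕ) (hq : mpPerm G = q) (hq0 : 0 < q)
    (hv' : Nat.card G'.verts = q) (hv'' : Nat.card G''.verts = q)
    (hp' : mpPerm G'.coe = q) (hp'' : mpPerm G''.coe = q) :
    (G'.verts ∩ G''.verts).Nonempty := by
  classical
  by_contra h
  rw [Set.not_nonempty_iff_eq_empty] at h
  have hdisj : ∀ v : Fin N, v ∈ G'.verts → v ∉ G''.verts := by
    intro v h1 h2
    exact absurd (Set.mem_inter h1 h2) (by rw [h]; exact Set.notMem_empty v)
  obtain ⟨π', hπ'⟩ := mpPerm_full G'.coe q hv' hp'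
  obtain ⟨π'', hπ''⟩ := mpPerm_full G''.coe q hv'' hp''
  -- extend the permutations to all of Fin N
  set e' := π'.extendDomain (Equiv.refl ↥G'.verts) with he'
  set e'' := π''.extendDomain (Equiv.refl ↥G''.verts) with he''
  set σ : Equiv.Perm (Fin N) := e' * e'' with hσ
  have hmem' : ∀ (v : ↥G'.verts), (↑(π' v) : Fin N) ∈ G'.verts := fun v => (π' v).2
  have hmem'' : ∀ (v : ↥G''.verts), (↑(π'' v) : Fin N) ∈ G''.verts := fun v => (π'' v).2
  have hσ' : ∀ v : Fin N, (hv : v ∈ G'.verts) → σ v = ↑(π' ⟨v, hv⟩) := by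
    intro v hv
    have h2 : v ∉ G''.verts := hdisj v hv
    simp only [hσ, Equiv.Perm.mul_apply, he', he'']
    rw [Equiv.Perm.extendDomain_apply_not_subtype _ _ h2,
      Equiv.Perm.extendDomain_apply_subtype _ _ hv]
    rfl
  have hσ'' : ∀ v : Fin N, (hv : v ∈ G''.verts) → σ v = ↑(π'' ⟨v, hv⟩) := by
    intro v hv
    simp only [hσ, Equiv.Perm.mul_apply, he', he'']
    rw [Equiv.Perm.extendDomain_apply_subtype _ _ hv]
    have h1 : (↑((Equiv.refl ↥G''.verts) (π'' ((Equiv.refl ↥G''.verts).symm ⟨v, hv⟩))) : Fin N)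
        ∉ G'.verts := by
      intro hc
      exact hdisj _ hc (hmem'' _)
    rw [Equiv.Perm.extendDomain_apply_not_subtype _ _ h1]
    rfl
  have hadj' : ∀ v : Fin N, v ∈ G'.verts → G.Adj v (σ v) := by
    intro v hv
    rw [hσ' v hv]
    exact G'.adj_sub (hπ' ⟨v, hv⟩)
  have hadj'' : ∀ v : Fin N, v ∈ G''.verts → G.Adj v (σ v) := by
    intro v hv
    rw [hσ'' v hv]
    exact G''.adj_sub (hπ'' ⟨v, hv⟩)
  -- combine into an injection from the disjoint union
  let f : ↥G'.verts ⊕ ↥G''.verts → {v : Fin N // G.Adj v (σ v)} :=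
    Sum.elim (fun x => ⟨↑x, hadj' x x.2⟩) (fun x => ⟨↑x, hadj'' x x.2⟩)
  have hfinj : Function.Injective f := by
    rintro (a | a) (b | b) hab <;>
      simp only [f, Sum.elim_inl, Sum.elim_inr, Subtype.mk.injEq] at hab
    · exact congrArg Sum.inl (Subtype.val_injective hab)
    · exact (hdisj _ a.2 (hab ▸ b.2)).elim
    · exact (hdisj _ b.2 (hab.symm ▸ a.2)).elim
    · exact congrArg Sum.inr (Subtype.val_injective hab)
  have hcard2 : 2 * q ≤ Nat.card {v : Fin N // G.Adj v (σ v)} := by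
    have := Nat.card_le_card_of_injective f hfinj
    rw [Nat.card_sum, hv', hv''] at this; omega
  have hmemS : Nat.card {v : Fin N // G.Adj v (σ v)} ∈
      {n : ℕ | ∃ π : Equiv.Perm (Fin N), n = Nat.card {v // G.Adj v (π v)}} := ⟨σ, rfl⟩
  have hbdd : BddAbove {n : ℕ | ∃ π : Equiv.Perm (Fin N), n = Nat.card {v // G.Adj v (π v)}} := by
    refine ⟨N, fun n hn => ?_⟩
    obtain ⟨π, rfl⟩ := hn
    calc Nat.card {v // G.Adj v (π v)} ≤ Nat.card (Fin N) :=
          Nat.card_le_card_of_injective Subtype.val Subtype.val_injective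
      _ = N := Nat.card_eq_fintype_card.trans (Fintype.card_fin N)
  have hle : Nat.card {v : Fin N // G.Adj v (σ v)} ≤ q := by
    have := le_csSup hbdd hmemS
    rwa [show sSup _ = q from hq] at this
  omega
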